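/- Let G be a finite simple graph with m ≥ 1 edges and minimum degree δ ≥ 1, and let α > 0 be real. Then SDD_α(G) ≥ 2 δ^{2α} m · (NK*(G))^{-α/m}. -/

import Mathlib

open Real Finset

noncomputable def SDD {V : Type*} [Fintype V] (G : SimpleGraph V) [DecidableRel G.Adj]
    (α : ℝ) : ℝ :=
  ∑ e ∈ G.edgeFinset, Sym2.lift
    ⟨fun u v => (G.degree u : ℝ) ^ α / (G.degree v : ℝ) ^ α +
                (G.degree v : ℝ) ^ α / (G.degree u : ℝ) ^ α,
     fun u v => by ring⟩ e

noncomputable def NKstar {V : Type*} [Fintype V] (G : SimpleGraph V)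
    [DecidableRel G.Adj] : ℝ :=
  ∏ u : V, (G.degree u : ℝ) ^ (G.degree u)

section Aux

variable {V : Type*} [Fintype V] (G : SimpleGraph V) [DecidableRel G.Adj]

lemma prod_dart_eq_prod_deg (f : V → ℝ) :
    ∏ d : G.Dart, f d.toProd.1 = ∏ v : V, f v ^ G.degree v := by
  classical
  rw [← Finset.prod_fiberwise_of_maps_to (g := fun d : G.Dart => d.toProd.1)
      (fun d _ => Finset.mem_univ d.toProd.1) (fun d => f d.toProd.1)]
  refine Finset.prod_congr rfl fun v _ => ?_
  rw [Finset.prod_congr rfl (fun d hd => ?_), Finset.prod_const,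
    show (Finset.univ.filter fun d : G.Dart => d.toProd.1 = v).card = G.degree v from
      G.dart_fst_fiber_card_eq_degree v]
  · rw [(Finset.mem_filter.mp hd).2]

lemma prod_dart_eq_prod_edge (f : V → ℝ) :
    ∏ d : G.Dart, f d.toProd.1 =
      ∏ e ∈ G.edgeFinset, Sym2.lift ⟨fun u v => f u * f v, fun u v => by ring⟩ e := by
  classical
  rw [← Finset.prod_fiberwise_of_maps_to (g := fun d : G.Dart => d.edge)
      (t := G.edgeFinset)
      (fun d _ => by simp [SimpleGraph.mem_edgeFinset, d.edge_mem]) (fun d => f d.toProd.1)]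
  refine Finset.prod_congr rfl fun e he => ?_
  revert he
  refine Sym2.ind (fun u v he => ?_) e
  have hadj : G.Adj u v := SimpleGraph.mem_edgeFinset.mp he
  let d : G.Dart := ⟨(u, v), hadj⟩
  have hfib : (Finset.univ.filter fun d' : G.Dart => d'.edge = s(u, v)) = {d, d.symm} := by
    have := d.edge_fiber
    convert this
    rfl
  rw [hfib, Finset.prod_insert (by simpa using d.symm_ne.symm), Finset.prod_singleton]
  simp [d, SimpleGraph.Dart.symm]

end Aux

theorem sdd_ge_nk {V : Type*} [Fintype V] (G : SimpleGraph V) [DecidableRel G.Adj]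
    (hm : 1 ≤ G.edgeFinset.card) (hδ : 1 ≤ G.minDegree) {α : ℝ} (hα : 0 < α) :
    2 * (G.minDegree : ℝ) ^ (2 * α) * (G.edgeFinset.card : ℝ) *
      NKstar G ^ (-α / (G.edgeFinset.card : ℝ)) ≤ SDD G α := by
  classical
  set m : ℕ := G.edgeFinset.card with hmdef
  have hm0 : (0 : ℝ) < m := by exact_mod_cast hm
  set δ : ℝ := (G.minDegree : ℝ) with hδdef
  have hδ1 : (1 : ℝ) ≤ δ := by rw [hδdef]; exact_mod_cast hδ
  have hδ0 : (0 : ℝ) < δ := lt_of_lt_of_le one_pos hδ1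
  set Z : Sym2 V → ℝ :=
    Sym2.lift ⟨fun u v => (G.degree u : ℝ) * (G.degree v : ℝ), fun u v => by ring⟩ with hZdef
  have hdeg : ∀ v : V, δ ≤ (G.degree v : ℝ) := fun v => by
    rw [hδdef]; exact_mod_cast G.minDegree_le_degree v
  have hdeg0 : ∀ v : V, (0 : ℝ) < (G.degree v : ℝ) := fun v => lt_of_lt_of_le hδ0 (hdeg v)
  have hZpos : ∀ e ∈ G.edgeFinset, (0 : ℝ) < Z e := by
    intro e he
    induction e with
    | _ u v => simpa [hZdef] using mul_pos (hdeg0 u) (hdeg0 v)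
  have hNK : NKstar G = ∏ e ∈ G.edgeFinset, Z e := by
    rw [NKstar, ← prod_dart_eq_prod_deg G (fun v => (G.degree v : ℝ)),
      prod_dart_eq_prod_edge G (fun v => (G.degree v : ℝ))]
  have hNKpos : 0 < NKstar G := by
    rw [hNK]; exact Finset.prod_pos hZpos
  -- AM-GM step
  have amgm : (m : ℝ) * NKstar G ^ (-α / (m : ℝ)) ≤ ∑ e ∈ G.edgeFinset, Z e ^ (-α) := by
    have h := Real.geom_mean_le_arith_mean_weighted G.edgeFinset (fun _ => (m : ℝ)⁻¹)
      (fun e => Z e ^ (-α)) (fun _ _ => by positivity)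
      (by simp [← hmdef]; field_simp)
      (fun e he => (Real.rpow_pos_of_pos (hZpos e he) _).le)
    have hL : ∏ e ∈ G.edgeFinset, (Z e ^ (-α)) ^ (m : ℝ)⁻¹
        = NKstar G ^ (-α / (m : ℝ)) := by
      have h1 : ∀ e ∈ G.edgeFinset, (Z e ^ (-α)) ^ (m : ℝ)⁻¹ = Z e ^ (-α / (m : ℝ)) := by
        intro e he
        rw [← Real.rpow_mul (hZpos e he).le, div_eq_mul_inv]
      rw [Finset.prod_congr rfl h1,
        Real.finset_prod_rpow _ _ (fun e he => (hZpos e he).le), ← hNK]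
    rw [hL, ← Finset.mul_sum] at h
    calc (m : ℝ) * NKstar G ^ (-α / (m : ℝ))
        ≤ (m : ℝ) * ((m : ℝ)⁻¹ * ∑ e ∈ G.edgeFinset, Z e ^ (-α)) :=
          mul_le_mul_of_nonneg_left h hm0.le
      _ = ∑ e ∈ G.edgeFinset, Z e ^ (-α) := by field_simp
  -- termwise bound
  have key : ∀ e ∈ G.edgeFinset, 2 * δ ^ (2 * α) * Z e ^ (-α) ≤
      Sym2.lift
        ⟨fun u v => (G.degree u : ℝ) ^ α / (G.degree v : ℝ) ^ α +
                    (G.degree v : ℝ) ^ α / (G.degree u : ℝ) ^ α,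
         fun u v => by ring⟩ e := by
    intro e he
    induction e with
    | _ u v =>
      simp only [hZdef, Sym2.lift_mk]
      set a : ℝ := (G.degree u : ℝ)
      set b : ℝ := (G.degree v : ℝ)
      have ha : 0 < a := hdeg0 u
      have hb : 0 < b := hdeg0 v
      have hab : (a * b) ^ (-α) = ((a ^ α) * (b ^ α))⁻¹ := by
        rw [Real.rpow_neg (by positivity), Real.mul_rpow ha.le hb.le]
      have hδ2 : δ ^ (2 * α) = δ ^ α * δ ^ α := by
        rw [two_mul, Real.rpow_add hδ0]
      rw [hab, hδ2]
      set A : ℝ := a ^ α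
      set B : ℝ := b ^ α
      set D : ℝ := δ ^ α
      have hA : 0 < A := Real.rpow_pos_of_pos ha _
      have hB : 0 < B := Real.rpow_pos_of_pos hb _
      have hDA : D ≤ A := Real.rpow_le_rpow hδ0.le (hdeg u) hα.le
      have hDB : D ≤ B := Real.rpow_le_rpow hδ0.le (hdeg v) hα.le
      have hD : 0 < D := Real.rpow_pos_of_pos hδ0 _
      have h2 : 2 * (D * D) ≤ A * A + B * B := by nlinarith
      calc 2 * (D * D) * (A * B)⁻¹ ≤ (A * A + B * B) * (A * B)⁻¹ :=
            mul_le_mul_of_nonneg_right h2 (by positivity)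
        _ = A / B + B / A := by
            rw [div_add_div _ _ hB.ne' hA.ne', div_eq_mul_inv, mul_comm B A]
  calc 2 * δ ^ (2 * α) * (m : ℝ) * NKstar G ^ (-α / (m : ℝ))
      = (2 * δ ^ (2 * α)) * ((m : ℝ) * NKstar G ^ (-α / (m : ℝ))) := by ring
    _ ≤ (2 * δ ^ (2 * α)) * ∑ e ∈ G.edgeFinset, Z e ^ (-α) :=
        mul_le_mul_of_nonneg_left amgm (by positivity)
    _ = ∑ e ∈ G.edgeFinset, 2 * δ ^ (2 * α) * Z e ^ (-α) := Finset.mul_sum _ _ _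
    _ ≤ SDD G α := Finset.sum_le_sum key
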